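/- Let p, q be relatively prime positive integers and a ∈ (0,1) with pa ∉ ℤ. Let h₁ < h₂ < ... < h_p be the x-coordinates of the bouncing points of γ(a, p/q) on the bottom edge of the unit square, ordered increasingly. Then (i-1)/p < h_i < i/p for every i, and (h_i + h_{i+1})/2 = i/p for every i ∈ {1, ..., p-1}. -/

import Mathlib

open Set

/-- The folding of the first coordinate: `fract x` if `⌊x⌋` is even, `1 - fract x` otherwise. -/
noncomputable def proj (x : ℝ) : ℝ := if Even ⌊x⌋ then Int.fract x else 1 - Int.fract x

private lemma aux_floor (p : ℕ) (hp : 0 < p) (n : ℤ) (α : ℝ) (h0 : 0 ≤ α) (h1 : α < 1) :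
    ⌊((n:ℝ) + α)/p⌋ = n / p ∧ Int.fract (((n:ℝ) + α)/p) = (((n % p : ℤ) : ℝ) + α)/p := by
  have hp' : (0:ℝ) < p := by exact_mod_cast hp
  have hpz : ((p:ℤ)) ≠ 0 := by exact_mod_cast hp.ne'
  have hmod0 : (0:ℤ) ≤ n % p := Int.emod_nonneg n hpz
  have hmodp : n % p < p := Int.emod_lt_of_pos n (by exact_mod_cast hp)
  have hdecomp : (n:ℝ) = (p:ℝ) * ((n / p : ℤ) : ℝ) + ((n % p : ℤ) : ℝ) := by
    exact_mod_cast congrArg (fun z : ℤ => (z : ℝ)) (Int.mul_ediv_add_emod n p).symm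
  have key : ((n:ℝ) + α)/p = ((n / p : ℤ) : ℝ) + ((((n % p : ℤ)) : ℝ) + α)/p := by
    rw [hdecomp]; field_simp; ring
  have hsmall0 : 0 ≤ ((((n % p : ℤ)) : ℝ) + α)/p := by
    apply div_nonneg _ hp'.le
    have : (0:ℝ) ≤ ((n % p : ℤ) : ℝ) := by exact_mod_cast hmod0
    linarith
  have hsmall1 : ((((n % p : ℤ)) : ℝ) + α)/p < 1 := by
    rw [div_lt_one hp']
    have : ((n % p : ℤ) : ℝ) ≤ (p:ℝ) - 1 := by
      have : (n % p : ℤ) ≤ (p:ℤ) - 1 := by omega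
      have := (@Int.cast_le ℝ _ _ _).2 this
      push_cast at this ⊢; linarith
    linarith
  constructor
  · rw [key, Int.floor_intCast_add, Int.floor_eq_zero_iff.2 ⟨hsmall0, hsmall1⟩, add_zero]
  · rw [key, Int.fract_intCast_add, Int.fract_eq_self.2 ⟨hsmall0, hsmall1⟩]

theorem stmt19 (p q : ℕ) (hp : 0 < p) (hq : 0 < q) (hpq : Nat.Coprime p q)
    (a : ℝ) (ha : a ∈ Ioo (0:ℝ) 1) (hns : ¬ ∃ m : ℤ, (p : ℝ) * a = m)
    (x : ℕ → ℝ) (hx : ∀ k, x k = 2 * k * q / p + a)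
    (h : Fin p → ℝ) (hmono : StrictMono h)
    (hrange : Set.range h = {y : ℝ | ∃ k : ℕ, k < p ∧ y = proj (x k)}) :
    (∀ i : Fin p, (i : ℝ) / p < h i ∧ h i < ((i : ℝ) + 1) / p) ∧
    ∀ i : ℕ, ∀ hi : i + 1 < p,
      (h ⟨i, Nat.lt_of_succ_lt hi⟩ + h ⟨i + 1, hi⟩) / 2 = ((i : ℝ) + 1) / p := by
  obtain ⟨ha0, ha1⟩ := ha
  have hp' : (0:ℝ) < p := by exact_mod_cast hp
  have hpz : ((p:ℤ)) ≠ 0 := by exact_mod_cast hp.ne'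
  set M : ℤ := ⌊(p:ℝ)*a⌋ with hM
  set α : ℝ := Int.fract ((p:ℝ)*a) with hα
  have hpa : (p:ℝ)*a = (M:ℝ) + α := by rw [hα, hM]; exact (Int.floor_add_fract _).symm
  have hα0 : 0 < α := by
    rcases lt_or_eq_of_le (Int.fract_nonneg ((p:ℝ)*a)) with hlt | heq
    · exact hα ▸ hlt
    · exact absurd ⟨M, by rw [hpa, hα, ← heq, add_zero]⟩ hns
  have hα1 : α < 1 := Int.fract_lt_one _
  -- the integer sequence and its reductions
  set n : ℕ → ℤ := fun k => 2*k*q + M with hn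
  set m : ℕ → ℤ := fun k => n k % (2*p) with hm
  have h2p : (0:ℤ) < 2*p := by positivity
  have hm0 : ∀ k, 0 ≤ m k := fun k => Int.emod_nonneg _ h2p.ne'
  have hm2p : ∀ k, m k < 2*p := fun k => Int.emod_lt_of_pos _ h2p
  have hnm2p : ∀ k, n k - m k = 2*p * (n k / (2*p)) := by
    intro k; rw [hm]; simp only []
    have := Int.mul_ediv_add_emod (n k) (2*p); linarith
  have hpar : ∀ k, ∃ c : ℤ, m k - M = 2*c := by
    intro k
    refine ⟨k*q - p * (n k / (2*p)), ?_⟩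
    have h1 := hnm2p k
    have h2 : n k = 2*k*q + M := rfl
    linarith [h1, h2]
  -- formula for x k
  have hxk : ∀ k, x k = ((n k : ℝ) + α)/p := by
    intro k
    have hA : ((M:ℝ) + α)/p = a := by rw [← hpa]; field_simp
    rw [hx k, hn]
    push_cast
    rw [← hA]
    ring
  have hfloor : ∀ k, ⌊x k⌋ = n k / p := by
    intro k; rw [hxk k]; exact (aux_floor p hp (n k) α hα0.le hα1).1
  have hfract : ∀ k, Int.fract (x k) = ((((n k % p : ℤ)) : ℝ) + α)/p := by
    intro k; rw [hxk k]; exact (aux_floor p hp (n k) α hα0.le hα1).2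
  have hnm : ∀ k, n k % p = m k % p := by
    intro k; rw [hm]
    exact (Int.emod_emod_of_dvd _ ⟨2, by ring⟩).symm
  have heven : ∀ k, (Even (n k / p) ↔ m k < p) := by
    intro k
    have hd : n k / p = m k / p + 2 * (n k / (2*p)) := by
      have h1 : n k = m k + (2 * (n k / (2*p))) * p := by have := hnm2p k; linarith
      calc n k / p = (m k + (2 * (n k / (2*p))) * p) / p := by rw [← h1]
        _ = m k / p + 2 * (n k / (2*p)) := Int.add_mul_ediv_right _ _ hpz
    rw [hd]
    have hmk0 := hm0 k; have hmk2 := hm2p k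
    by_cases hc : m k < p
    · have : m k / p = 0 := Int.ediv_eq_zero_of_lt hmk0 hc
      rw [this]
      simp [hc, parity_simps]
    · have h1 : m k = (m k - p) + 1 * p := by ring
      have h2 : m k / p = (m k - p)/p + 1 := by
        calc m k / p = ((m k - p) + 1 * p) / p := by rw [← h1]
          _ = (m k - p)/p + 1 := Int.add_mul_ediv_right _ _ hpz
      have h3 : (m k - p)/p = 0 := Int.ediv_eq_zero_of_lt (by omega) (by omega)
      rw [h2, h3]
      simp only [zero_add]
      constructor
      · rintro hEv
        exfalso
        rcases hEv with ⟨d, hd2⟩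
        omega
      · intro hcc; exact absurd hcc hc
  -- the explicit values
  set g : ℤ → ℝ := fun i => ((i:ℝ) + if Even (i - M) then α else 1 - α)/p with hg
  set idx : ℕ → ℤ := fun k => if m k < p then m k else 2*p - 1 - m k with hidx
  have hidxb : ∀ k, 0 ≤ idx k ∧ idx k < p := by
    intro k
    have h1 := hm0 k; have h2 := hm2p k
    rw [hidx]; dsimp only
    split <;> omega
  have hproj : ∀ k, proj (x k) = g (idx k) := by
    intro k
    obtain ⟨c, hc⟩ := hpar k
    have h1 := hm0 k; have h2 := hm2p k
    rw [proj, hfloor, hfract, hnm]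
    by_cases hcase : m k < p
    · rw [if_pos ((heven k).2 hcase)]
      have hmod : m k % p = m k := Int.emod_eq_of_lt h1 hcase
      have hidxk : idx k = m k := if_pos hcase
      have hEv : Even (idx k - M) := ⟨c, by omega⟩
      rw [hmod, hg]; dsimp only
      rw [if_pos hEv, hidxk]
    · rw [if_neg (by rw [heven k]; exact hcase)]
      have hmod : m k % p = m k - p := by
        have hs : (m k - p) % p = m k % p := (Int.sub_emod_right _ _)
        have : (m k - p) % p = m k - p := Int.emod_eq_of_lt (by omega) (by omega)
        omega
      have hidxk : idx k = 2*p - 1 - m k := if_neg hcase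
      have hEv : ¬ Even (idx k - M) := by
        rintro ⟨d, hd⟩
        omega
      rw [hmod, hg]; dsimp only
      rw [if_neg hEv, hidxk]
      push_cast
      field_simp
      ring
  -- injectivity of idx on [0, p)
  have hinj : ∀ k k' : ℕ, k < p → k' < p → idx k = idx k' → k = k' := by
    intro k k' hk hk' he
    obtain ⟨c, hc⟩ := hpar k
    obtain ⟨c', hc'⟩ := hpar k'
    have h1 := hm0 k; have h2 := hm2p k
    have h1' := hm0 k'; have h2' := hm2p k'
    have hmm : m k = m k' := by
      rw [hidx] at he; dsimp only at he
      split at he <;> split at he <;> omega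
    have hdvd : (2*(p:ℤ)) ∣ (n k - n k') := by
      refine ⟨n k / (2*p) - n k' / (2*p), ?_⟩
      have e1 := hnm2p k; have e2 := hnm2p k'
      rw [hmm] at e1
      linarith [e1, e2]
    have hdvd2 : (p:ℤ) ∣ (q:ℤ) * ((k:ℤ) - k') := by
      obtain ⟨d, hd⟩ := hdvd
      refine ⟨d, ?_⟩
      have e1 : n k = 2*k*q + M := rfl
      have e2 : n k' = 2*k'*q + M := rfl
      have : 2*(k:ℤ)*q - 2*k'*q = 2*p*d := by rw [e1, e2] at hd; linarith
      linarith
    have hcop : IsCoprime ((p:ℤ)) ((q:ℤ)) := by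
      rw [Int.isCoprime_iff_gcd_eq_one]
      exact_mod_cast hpq
    have hdvd3 : (p:ℤ) ∣ ((k:ℤ) - k') := hcop.dvd_of_dvd_mul_left hdvd2
    have habs : |(k:ℤ) - k'| < p := by
      rw [abs_lt]
      constructor <;> [skip; skip] <;> push_cast <;> omega
    have := Int.eq_zero_of_abs_lt_dvd hdvd3 habs
    omega
  -- surjectivity
  have hsurj : ∀ i : ℤ, 0 ≤ i → i < p → ∃ k : ℕ, k < p ∧ idx k = i := by
    have hφinj : Function.Injective (fun k : Fin p => (⟨(idx k).toNat, by
        have := hidxb k; omega⟩ : Fin p)) := by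
      intro k k' hkk
      have hb := hidxb (k : ℕ); have hb' := hidxb (k' : ℕ)
      have : (idx k).toNat = (idx k').toNat := congrArg Fin.val hkk
      have heq : idx (k : ℕ) = idx (k' : ℕ) := by omega
      exact Fin.ext (hinj k k' k.2 k'.2 heq)
    have hφsurj := Finite.injective_iff_surjective.1 hφinj
    intro i hi0 hip
    obtain ⟨k, hk⟩ := hφsurj ⟨i.toNat, by omega⟩
    refine ⟨k, k.2, ?_⟩
    have : (idx (k : ℕ)).toNat = i.toNat := congrArg Fin.val hk
    have hb := hidxb (k : ℕ)
    omega
  -- bounds for g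
  have hgb : ∀ i : ℤ, (i:ℝ)/p < g i ∧ g i < ((i:ℝ)+1)/p := by
    intro i
    rw [hg]; dsimp only
    have hcb : 0 < (if Even (i - M) then α else 1 - α) ∧
        (if Even (i - M) then α else 1 - α) < 1 := by
      split <;> constructor <;> linarith
    have hlt : ∀ u v : ℝ, u < v → u/(p:ℝ) < v/(p:ℝ) := by
      intro u v huv; gcongr
    constructor
    · exact hlt _ _ (by linarith [hcb.1])
    · exact hlt _ _ (by linarith [hcb.2])
  -- the explicit enumeration
  set G : Fin p → ℝ := fun i => g ((i : ℕ) : ℤ) with hG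
  have hGmono : StrictMono G := by
    intro i j hij
    have hi2 := hgb (((i:ℕ)):ℤ)
    have hj2 := hgb (((j:ℕ)):ℤ)
    have hstep : ((((i:ℕ):ℤ)):ℝ) + 1 ≤ ((((j:ℕ):ℤ)):ℝ) := by
      have h1 : (i:ℕ) + 1 ≤ (j:ℕ) := hij
      have : ((i:ℕ):ℝ) + 1 ≤ ((j:ℕ):ℝ) := by exact_mod_cast h1
      push_cast
      push_cast at this
      linarith
    have hmid : (((((i:ℕ):ℤ)):ℝ) + 1)/p ≤ (((((j:ℕ):ℤ)):ℝ))/p := by gcongr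
    calc G i < (((((i:ℕ):ℤ)):ℝ) + 1)/p := hi2.2
      _ ≤ (((((j:ℕ):ℤ)):ℝ))/p := hmid
      _ < G j := hj2.1
  have hrangeG : Set.range h = Set.range G := by
    rw [hrange]
    ext y
    simp only [Set.mem_setOf_eq, Set.mem_range]
    constructor
    · rintro ⟨k, hk, rfl⟩
      have hb := hidxb k
      refine ⟨⟨(idx k).toNat, by omega⟩, ?_⟩
      rw [hG]; dsimp only
      rw [hproj k]
      congr 1
      omega
    · rintro ⟨i, rfl⟩
      obtain ⟨k, hk, hik⟩ := hsurj (((i:ℕ)):ℤ) (by positivity) (by exact_mod_cast i.2)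
      refine ⟨k, hk, ?_⟩
      rw [hproj k, hik, hG]
  haveI : WellFoundedLT (Fin p) := Finite.to_wellFoundedLT
  have hhG : h = G := (StrictMono.range_inj hmono hGmono).1 hrangeG
  subst hhG
  constructor
  · intro i
    have hb := hgb (((i:ℕ)):ℤ)
    rw [hG]; dsimp only
    constructor
    · have := hb.1; push_cast at this ⊢; convert this using 2
    · have := hb.2; push_cast at this ⊢; convert this using 2
  · intro i hi
    have key : ∀ j : ℤ, g j + g (j+1) = (2*(j:ℝ) + 2)/p := by
      intro j
      rw [hg]; dsimp only
      by_cases hEv : Even (j - M)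
      · have hodd : ¬ Even (j + 1 - M) := by
          rintro ⟨d, hd⟩
          obtain ⟨e, he⟩ := hEv
          omega
        rw [if_pos hEv, if_neg hodd]
        push_cast
        field_simp
        ring
      · have heven2 : Even (j + 1 - M) := by
          rcases Int.even_or_odd (j - M) with h1 | h1
          · exact absurd h1 hEv
          · obtain ⟨d, hd⟩ := h1
            exact ⟨d + 1, by omega⟩
        rw [if_neg hEv, if_pos heven2]
        push_cast
        field_simp
        ring
    rw [hG]; dsimp only
    have hk := key ((i:ℕ):ℤ)
    have hcast : ((((i+1 : ℕ)):ℤ)) = ((i:ℕ):ℤ) + 1 := by push_cast; ring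
    rw [hcast, hk]
    push_cast
    field_simp
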